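/- Let p ≥ 3 with p ≡ 3 (mod 4) be an integer and let D be a digraph on n ≥ p+2 vertices. For any triple S of vertices of D disjoint from a fixed (p−1)-set X, performing all inversions of the sets X_i ∪ S, where X_i ranges over all subsets of X of size p−3, reverses exactly the arcs of D[S] and no other arc. -/

import Mathlib

/-- Inverting the vertex set `X` in `D`: all arcs with both endvertices in `X` are reversed. -/
def invert {V : Type*} [DecidableEq V] (D : V → V → Prop) (X : Finset V) : V → V → Prop :=
  fun u v => if u ∈ X ∧ v ∈ X then D v u else D u v

/-- Applying a sequence of inversions. -/
def invertSeq {V : Type*} [DecidableEq V] (D : V → V → Prop) (l : List (Finset V)) :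
    V → V → Prop :=
  l.foldl invert D

private lemma invertSeq_parity {V : Type*} [DecidableEq V] (D : V → V → Prop)
    (l : List (Finset V)) (u v : V) :
    invertSeq D l u v ↔
      if l.countP (fun A => decide (u ∈ A ∧ v ∈ A)) % 2 = 1 then D v u else D u v := by
  induction l generalizing D with
  | nil => simp [invertSeq]
  | cons a l ih =>
    have h1 : invertSeq D (a :: l) u v ↔ invertSeq (invert D a) l u v := Iff.rfl
    rw [h1, ih, List.countP_cons]
    by_cases h : u ∈ a ∧ v ∈ a
    · have h' : v ∈ a ∧ u ∈ a := ⟨h.2, h.1⟩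
      have hd : (if (decide (u ∈ a ∧ v ∈ a)) = true then 1 else 0) = 1 := by simp [h]
      rw [hd]
      by_cases hc : l.countP (fun A => decide (u ∈ A ∧ v ∈ A)) % 2 = 1
      · have hc' : ¬ ((l.countP (fun A => decide (u ∈ A ∧ v ∈ A)) + 1) % 2 = 1) := by omega
        rw [if_pos hc, if_neg hc']
        simp [invert, h']
      · have hc' : (l.countP (fun A => decide (u ∈ A ∧ v ∈ A)) + 1) % 2 = 1 := by omega
        rw [if_neg hc, if_pos hc']
        simp [invert, h]
    · have hd : (if (decide (u ∈ a ∧ v ∈ a)) = true then 1 else 0) = 0 := by simp [h]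
      rw [hd, Nat.add_zero]
      have h' : ¬ (v ∈ a ∧ u ∈ a) := fun hh => h ⟨hh.2, hh.1⟩
      by_cases hc : l.countP (fun A => decide (u ∈ A ∧ v ∈ A)) % 2 = 1
      · rw [if_pos hc, if_pos hc]; simp [invert, h']
      · rw [if_neg hc, if_neg hc]; simp [invert, h]

private lemma countP_toList {α : Type*} (s : Finset α) (P : α → Prop) [DecidablePred P] :
    s.toList.countP (fun a => decide (P a)) = (s.filter P).card := by
  have h : s.toList.countP (fun a => decide (P a)) = Multiset.countP P (↑s.toList) := rfl
  rw [h, Finset.coe_toList, Multiset.countP_eq_card_filter]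
  rfl

private lemma card_filter_mem_one {α : Type*} [DecidableEq α] (X : Finset α) (v : α)
    (hv : v ∈ X) (j : ℕ) :
    ((X.powersetCard (j + 1)).filter (fun A => v ∈ A)).card = (X.card - 1).choose j := by
  rw [← Finset.card_erase_of_mem hv, ← Finset.card_powersetCard j (X.erase v)]
  apply Finset.card_nbij' (fun A => A.erase v) (fun B => insert v B)
  · intro A hA
    simp only [Finset.mem_coe, Finset.mem_filter, Finset.mem_powersetCard] at hA
    obtain ⟨⟨hsub, hcard⟩, hvA⟩ := hA
    rw [Finset.mem_coe, Finset.mem_powersetCard]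
    refine ⟨fun x hx => ?_, ?_⟩
    · simp only [Finset.mem_erase] at hx ⊢
      exact ⟨hx.1, hsub hx.2⟩
    · rw [Finset.card_erase_of_mem hvA, hcard]; omega
  · intro B hB
    rw [Finset.mem_coe, Finset.mem_powersetCard] at hB
    obtain ⟨hsub, hcard⟩ := hB
    have hvB : v ∉ B := fun h => (Finset.mem_erase.mp (hsub h)).1 rfl
    simp only [Finset.mem_coe, Finset.mem_filter, Finset.mem_powersetCard]
    refine ⟨⟨fun x hx => ?_, ?_⟩, Finset.mem_insert_self _ _⟩
    · rcases Finset.mem_insert.mp hx with rfl | hx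
      · exact hv
      · exact (Finset.mem_erase.mp (hsub hx)).2
    · rw [Finset.card_insert_of_notMem hvB, hcard]
  · intro A hA
    simp only [Finset.mem_coe, Finset.mem_filter] at hA
    exact Finset.insert_erase hA.2
  · intro B hB
    rw [Finset.mem_coe, Finset.mem_powersetCard] at hB
    have hvB : v ∉ B := fun h => (Finset.mem_erase.mp (hB.1 h)).1 rfl
    exact Finset.erase_insert hvB

private lemma card_filter_mem_two {α : Type*} [DecidableEq α] (X : Finset α) (u v : α)
    (hu : u ∈ X) (hv : v ∈ X) (huv : u ≠ v) (j : ℕ) :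
    ((X.powersetCard (j + 2)).filter (fun A => u ∈ A ∧ v ∈ A)).card
      = (X.card - 2).choose j := by
  have hcard2 : ((X.erase u).erase v).card = X.card - 2 := by
    rw [Finset.card_erase_of_mem (Finset.mem_erase.mpr ⟨huv.symm, hv⟩),
      Finset.card_erase_of_mem hu]
    omega
  rw [← hcard2, ← Finset.card_powersetCard j ((X.erase u).erase v)]
  apply Finset.card_nbij' (fun A => (A.erase u).erase v) (fun B => insert u (insert v B))
  · intro A hA
    simp only [Finset.mem_coe, Finset.mem_filter, Finset.mem_powersetCard] at hA
    obtain ⟨⟨hsub, hcard⟩, huA, hvA⟩ := hA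
    rw [Finset.mem_coe, Finset.mem_powersetCard]
    refine ⟨fun x hx => ?_, ?_⟩
    · simp only [Finset.mem_erase] at hx ⊢
      exact ⟨hx.1, hx.2.1, hsub hx.2.2⟩
    · rw [Finset.card_erase_of_mem (Finset.mem_erase.mpr ⟨huv.symm, hvA⟩),
        Finset.card_erase_of_mem huA, hcard]
      omega
  · intro B hB
    rw [Finset.mem_coe, Finset.mem_powersetCard] at hB
    obtain ⟨hsub, hcard⟩ := hB
    have hvB : v ∉ B := fun h => (Finset.mem_erase.mp (hsub h)).1 rfl
    have huB : u ∉ B := fun h => (Finset.mem_erase.mp (Finset.mem_erase.mp (hsub h)).2).1 rfl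
    have huvB : u ∉ insert v B := by
      simp only [Finset.mem_insert]
      rintro (rfl | h)
      · exact huv rfl
      · exact huB h
    simp only [Finset.mem_coe, Finset.mem_filter, Finset.mem_powersetCard]
    refine ⟨⟨fun x hx => ?_, ?_⟩, Finset.mem_insert_self _ _,
      Finset.mem_insert_of_mem (Finset.mem_insert_self _ _)⟩
    · rcases Finset.mem_insert.mp hx with rfl | hx
      · exact hu
      · rcases Finset.mem_insert.mp hx with rfl | hx
        · exact hv
        · exact (Finset.mem_erase.mp (Finset.mem_erase.mp (hsub hx)).2).2
    · rw [Finset.card_insert_of_notMem huvB, Finset.card_insert_of_notMem hvB, hcard]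
  · intro A hA
    simp only [Finset.mem_coe, Finset.mem_filter] at hA
    obtain ⟨_, huA, hvA⟩ := hA
    have : v ∈ A.erase u := Finset.mem_erase.mpr ⟨huv.symm, hvA⟩
    beta_reduce
    rw [Finset.insert_erase this, Finset.insert_erase huA]
  · intro B hB
    rw [Finset.mem_coe, Finset.mem_powersetCard] at hB
    have hvB : v ∉ B := fun h => (Finset.mem_erase.mp (hB.1 h)).1 rfl
    have huB : u ∉ B := fun h => (Finset.mem_erase.mp (Finset.mem_erase.mp (hB.1 h)).2).1 rfl
    have huvB : u ∉ insert v B := by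
      simp only [Finset.mem_insert]
      rintro (rfl | h)
      · exact huv rfl
      · exact huB h
    beta_reduce
    rw [Finset.erase_insert huvB, Finset.erase_insert hvB]

/-- Let `p ≡ 3 (mod 4)`, `p ≥ 3`, and let `D` be a digraph on `n ≥ p+2` vertices.  For any
triple `S` of vertices disjoint from a `(p-1)`-set `X`, performing all inversions of the sets
`Xᵢ ∪ S`, where `Xᵢ` ranges over the `(p-3)`-subsets of `X`, reverses exactly the arcs of
`D[S]` and no other arc; that is, the result equals `Inv(D, S)`. -/
theorem stmt_8 {V : Type*} [Fintype V] [DecidableEq V] (D : V → V → Prop) (p : ℕ)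
    (hp : 3 ≤ p) (hpmod : p % 4 = 3) (hn : p + 2 ≤ Fintype.card V)
    (X S : Finset V) (hX : X.card = p - 1) (hS : S.card = 3) (hdisj : Disjoint X S) :
    ∀ u v, invertSeq D ((X.powersetCard (p - 3)).toList.map (fun A => A ∪ S)) u v ↔
      invert D S u v := by
  intro u v
  rcases eq_or_lt_of_le hp with h3 | h7
  · -- p = 3
    have hk : p - 3 = 0 := by omega
    rw [hk, Finset.powersetCard_zero, Finset.toList_singleton, List.map_singleton,
      Finset.empty_union]
    exact Iff.rfl
  · -- p ≥ 7 (since p ≡ 3 mod 4 and p > 3)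
    obtain ⟨t, rfl⟩ : ∃ t, p = 4 * t + 3 := ⟨p / 4, by omega⟩
    have ht : 1 ≤ t := by omega
    have hXc : X.card = 4 * t + 2 := by rw [hX]; omega
    have hk : 4 * t + 3 - 3 = 4 * t := by omega
    rw [invertSeq_parity, List.countP_map, hk]
    have hcomp : ((fun A => decide (u ∈ A ∧ v ∈ A)) ∘ fun A => A ∪ S)
        = fun A : Finset V => decide (u ∈ A ∪ S ∧ v ∈ A ∪ S) := rfl
    rw [hcomp, countP_toList]
    set N := ((X.powersetCard (4 * t)).filter (fun A => u ∈ A ∪ S ∧ v ∈ A ∪ S)).card with hN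
    -- key parity claim
    have key : (N % 2 = 1) ↔ (u ∈ S ∧ v ∈ S) := by
      by_cases hu : u ∈ S <;> by_cases hv : v ∈ S
      · -- both in S : all sets counted
        have : (X.powersetCard (4 * t)).filter (fun A => u ∈ A ∪ S ∧ v ∈ A ∪ S)
            = X.powersetCard (4 * t) := by
          apply Finset.filter_true_of_mem
          intro A _
          exact ⟨Finset.mem_union_right _ hu, Finset.mem_union_right _ hv⟩
        rw [hN, this, Finset.card_powersetCard, hXc]
        have hsym : (4 * t + 2).choose (4 * t) = (4 * t + 2).choose 2 := by
          have h := Nat.choose_symm (show 2 ≤ 4 * t + 2 by omega)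
          rw [(by omega : 4 * t + 2 - 2 = 4 * t)] at h
          exact h
        rw [hsym, Nat.choose_two_right]
        have h1 : (4 * t + 2) * (4 * t + 2 - 1) = 2 * ((2 * t + 1) * (4 * t + 1)) := by
          have : 4 * t + 2 - 1 = 4 * t + 1 := by omega
          rw [this]; ring
        rw [h1, Nat.mul_div_cancel_left _ (by norm_num : 0 < 2), Nat.mul_mod,
          (by omega : (2 * t + 1) % 2 = 1), (by omega : (4 * t + 1) % 2 = 1)]
        simp [hu, hv]
      · -- u ∈ S, v ∉ S
        simp only [hu, hv, and_false, iff_false]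
        by_cases hvX : v ∈ X
        · have hfe : (X.powersetCard (4 * t)).filter (fun A => u ∈ A ∪ S ∧ v ∈ A ∪ S)
              = (X.powersetCard (4 * t)).filter (fun A => v ∈ A) := by
            apply Finset.filter_congr
            intro A _
            simp only [Finset.mem_union]
            constructor
            · rintro ⟨_, hv' | hv'⟩
              · exact hv'
              · exact absurd hv' hv
            · exact fun h => ⟨Or.inr hu, Or.inl h⟩
          have h4t : 4 * t = (4 * t - 1) + 1 := by omega
          rw [hN, hfe, h4t, card_filter_mem_one X v hvX, hXc]
          have hsym : (4 * t + 2 - 1).choose (4 * t - 1) = (4 * t + 1).choose 2 := by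
            have h := Nat.choose_symm (show 2 ≤ 4 * t + 1 by omega)
            rw [(by omega : 4 * t + 1 - 2 = 4 * t - 1)] at h
            rw [(by omega : 4 * t + 2 - 1 = 4 * t + 1)]
            exact h
          rw [hsym, Nat.choose_two_right]
          have h1 : (4 * t + 1) * (4 * t + 1 - 1) = 2 * ((4 * t + 1) * (2 * t)) := by
            have : 4 * t + 1 - 1 = 4 * t := by omega
            rw [this]; ring
          rw [h1, Nat.mul_div_cancel_left _ (by norm_num : 0 < 2), Nat.mul_mod,
            (by omega : (2 * t) % 2 = 0)]
          simp
        · have hfe : (X.powersetCard (4 * t)).filter (fun A => u ∈ A ∪ S ∧ v ∈ A ∪ S) = ∅ := by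
            apply Finset.filter_false_of_mem
            intro A hA
            rw [Finset.mem_powersetCard] at hA
            simp only [Finset.mem_union]
            rintro ⟨_, hv' | hv'⟩
            · exact hvX (hA.1 hv')
            · exact hv hv'
          rw [hN, hfe]
          simp
      · -- v ∈ S, u ∉ S
        simp only [hu, hv, false_and, iff_false]
        by_cases huX : u ∈ X
        · have hfe : (X.powersetCard (4 * t)).filter (fun A => u ∈ A ∪ S ∧ v ∈ A ∪ S)
              = (X.powersetCard (4 * t)).filter (fun A => u ∈ A) := by
            apply Finset.filter_congr
            intro A _
            simp only [Finset.mem_union]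
            constructor
            · rintro ⟨hu' | hu', _⟩
              · exact hu'
              · exact absurd hu' hu
            · exact fun h => ⟨Or.inl h, Or.inr hv⟩
          have h4t : 4 * t = (4 * t - 1) + 1 := by omega
          rw [hN, hfe, h4t, card_filter_mem_one X u huX, hXc]
          have hsym : (4 * t + 2 - 1).choose (4 * t - 1) = (4 * t + 1).choose 2 := by
            have h := Nat.choose_symm (show 2 ≤ 4 * t + 1 by omega)
            rw [(by omega : 4 * t + 1 - 2 = 4 * t - 1)] at h
            rw [(by omega : 4 * t + 2 - 1 = 4 * t + 1)]
            exact h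
          rw [hsym, Nat.choose_two_right]
          have h1 : (4 * t + 1) * (4 * t + 1 - 1) = 2 * ((4 * t + 1) * (2 * t)) := by
            have : 4 * t + 1 - 1 = 4 * t := by omega
            rw [this]; ring
          rw [h1, Nat.mul_div_cancel_left _ (by norm_num : 0 < 2), Nat.mul_mod,
            (by omega : (2 * t) % 2 = 0)]
          simp
        · have hfe : (X.powersetCard (4 * t)).filter (fun A => u ∈ A ∪ S ∧ v ∈ A ∪ S) = ∅ := by
            apply Finset.filter_false_of_mem
            intro A hA
            rw [Finset.mem_powersetCard] at hA
            simp only [Finset.mem_union]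
            rintro ⟨hu' | hu', _⟩
            · exact huX (hA.1 hu')
            · exact hu hu'
          rw [hN, hfe]
          simp
      · -- u ∉ S, v ∉ S
        simp only [hu, hv, and_false, iff_false]
        by_cases huX : u ∈ X
        · by_cases hvX : v ∈ X
          · by_cases huv : u = v
            · subst huv
              have hfe : (X.powersetCard (4 * t)).filter (fun A => u ∈ A ∪ S ∧ u ∈ A ∪ S)
                  = (X.powersetCard (4 * t)).filter (fun A => u ∈ A) := by
                apply Finset.filter_congr
                intro A _
                simp only [Finset.mem_union]
                constructor
                · rintro ⟨hu' | hu', _⟩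
                  · exact hu'
                  · exact absurd hu' hu
                · exact fun h => ⟨Or.inl h, Or.inl h⟩
              have h4t : 4 * t = (4 * t - 1) + 1 := by omega
              rw [hN, hfe, h4t, card_filter_mem_one X u huX, hXc]
              have hsym : (4 * t + 2 - 1).choose (4 * t - 1) = (4 * t + 1).choose 2 := by
                have h := Nat.choose_symm (show 2 ≤ 4 * t + 1 by omega)
                rw [(by omega : 4 * t + 1 - 2 = 4 * t - 1)] at h
                rw [(by omega : 4 * t + 2 - 1 = 4 * t + 1)]
                exact h
              rw [hsym, Nat.choose_two_right]
              have h1 : (4 * t + 1) * (4 * t + 1 - 1) = 2 * ((4 * t + 1) * (2 * t)) := by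
                have : 4 * t + 1 - 1 = 4 * t := by omega
                rw [this]; ring
              rw [h1, Nat.mul_div_cancel_left _ (by norm_num : 0 < 2), Nat.mul_mod,
                (by omega : (2 * t) % 2 = 0)]
              simp
            · have hfe : (X.powersetCard (4 * t)).filter (fun A => u ∈ A ∪ S ∧ v ∈ A ∪ S)
                  = (X.powersetCard (4 * t)).filter (fun A => u ∈ A ∧ v ∈ A) := by
                apply Finset.filter_congr
                intro A _
                simp only [Finset.mem_union]
                constructor
                · rintro ⟨hu' | hu', hv' | hv'⟩
                  · exact ⟨hu', hv'⟩
                  · exact absurd hv' hv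
                  · exact absurd hu' hu
                  · exact absurd hu' hu
                · exact fun h => ⟨Or.inl h.1, Or.inl h.2⟩
              have h4t : 4 * t = (4 * t - 2) + 2 := by omega
              rw [hN, hfe, h4t, card_filter_mem_two X u v huX hvX huv, hXc]
              have hsym : (4 * t + 2 - 2).choose (4 * t - 2) = (4 * t).choose 2 := by
                rw [(by omega : 4 * t + 2 - 2 = 4 * t)]
                exact Nat.choose_symm (by omega)
              rw [hsym, Nat.choose_two_right]
              have h1 : (4 * t) * (4 * t - 1) = 2 * ((2 * t) * (4 * t - 1)) := by
                rw [(by omega : 4 * t - 1 = 4 * (t - 1) + 3), (by omega : t = (t - 1) + 1)]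
                ring
              rw [h1, Nat.mul_div_cancel_left _ (by norm_num : 0 < 2), Nat.mul_mod,
                (by omega : (2 * t) % 2 = 0)]
              simp
          · have hfe : (X.powersetCard (4 * t)).filter (fun A => u ∈ A ∪ S ∧ v ∈ A ∪ S) = ∅ := by
              apply Finset.filter_false_of_mem
              intro A hA
              rw [Finset.mem_powersetCard] at hA
              simp only [Finset.mem_union]
              rintro ⟨_, hv' | hv'⟩
              · exact hvX (hA.1 hv')
              · exact hv hv'
            rw [hN, hfe]
            simp
        · have hfe : (X.powersetCard (4 * t)).filter (fun A => u ∈ A ∪ S ∧ v ∈ A ∪ S) = ∅ := by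
            apply Finset.filter_false_of_mem
            intro A hA
            rw [Finset.mem_powersetCard] at hA
            simp only [Finset.mem_union]
            rintro ⟨hu' | hu', _⟩
            · exact huX (hA.1 hu')
            · exact hu hu'
          rw [hN, hfe]
          simp
    rw [invert]
    exact iff_of_eq (if_congr key rfl rfl)
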